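/- Suppose the realized public ratings are such that neither event B4 nor event B5 occurs. Then for all ranks i ≠ j, writing x = r^M_{m_i} − r^M_{m_j} and y = r^W_{w_i} − r^W_{w_j}: if |x| ≤ 2L or |y| ≤ 2L, then |x − y| < 2L. -/
import Mathlib


noncomputable section

/-- 0-indexed rank: the number of agents with strictly larger rating. -/
def rankOf {n : ℕ} (r : Fin n → ℝ) (a : Fin n) : ℕ :=
  (Finset.univ.filter fun b => r a < r b).card

/-- Number of agents whose rating lies in the closed interval with endpoints `s` and `t`. -/
def countBetween {n : ℕ} (r : Fin n → ℝ) (s t : ℝ) : ℕ :=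
  (Finset.univ.filter fun m => min s t ≤ r m ∧ r m ≤ max s t).card

/-- Event B4 (see the paper): some pair of ranks `i ≠ j` whose rating-difference and
interval-count behave atypically. -/
def EventB4 (n : ℕ) (L : ℝ) (rM rW : Fin n → ℝ) : Prop :=
  ∃ a a' b b' : Fin n, a ≠ a' ∧
    rankOf rM a = rankOf rW b ∧ rankOf rM a' = rankOf rW b' ∧
    ((|rM a - rM a'| ≤ 4*L ∧
      ¬ (2 + |rM a - rM a'| * ((n:ℝ)-2) - L*((n:ℝ)-2) <
           (countBetween rM (rM a) (rM a') : ℝ) ∧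
         (countBetween rM (rM a) (rM a') : ℝ) <
           2 + |rM a - rM a'| * ((n:ℝ)-2) + L*((n:ℝ)-2))) ∨
     (|rW b - rW b'| ≤ 4*L ∧
      ¬ (2 + |rW b - rW b'| * ((n:ℝ)-2) - L*((n:ℝ)-2) <
           (countBetween rW (rW b) (rW b') : ℝ) ∧
         (countBetween rW (rW b) (rW b') : ℝ) <
           2 + |rW b - rW b'| * ((n:ℝ)-2) + L*((n:ℝ)-2))))

/-- Event B5 (see the paper). -/
def EventB5 (n : ℕ) (L : ℝ) (rM rW : Fin n → ℝ) : Prop :=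
  ∃ a a' b b' : Fin n, a ≠ a' ∧
    rankOf rM a = rankOf rW b ∧ rankOf rM a' = rankOf rW b' ∧
    ((4*L < |rW b - rW b'| ∧
        (countBetween rW (rW b) (rW b') : ℝ) ≤ 2 + 3*L*((n:ℝ)-2)) ∨
     (4*L < |rM a - rM a'| ∧
        (countBetween rM (rM a) (rM a') : ℝ) ≤ 2 + 3*L*((n:ℝ)-2)))

open Finset in
lemma rank_add_count {n : ℕ} {r : Fin n → ℝ} (hr : Function.Injective r)
    {a a' : Fin n} (h : r a' < r a) :
    countBetween r (r a) (r a') + rankOf r a = rankOf r a' + 1 := by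
  classical
  have hmin : min (r a) (r a') = r a' := min_eq_right h.le
  have hmax : max (r a) (r a') = r a := max_eq_left h.le
  unfold countBetween rankOf
  rw [hmin, hmax]
  have hdisj : Disjoint (univ.filter fun m => r a' ≤ r m ∧ r m ≤ r a)
      (univ.filter fun m => r a < r m) := by
    simp only [disjoint_left, mem_filter, mem_univ, true_and]
    rintro m ⟨_, h1⟩ h2
    exact absurd h2 (not_lt.mpr h1)
  have hunion : (univ.filter fun m => r a' ≤ r m ∧ r m ≤ r a) ∪
      (univ.filter fun m => r a < r m) = univ.filter fun m => r a' ≤ r m := by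
    ext m
    simp only [mem_union, mem_filter, mem_univ, true_and]
    constructor
    · rintro (⟨h1, _⟩ | h1)
      · exact h1
      · exact le_of_lt (h.trans h1)
    · intro hm
      rcases le_or_gt (r m) (r a) with h2 | h2
      · exact Or.inl ⟨hm, h2⟩
      · exact Or.inr h2
  have hins : (univ.filter fun m => r a' ≤ r m)
      = insert a' (univ.filter fun m => r a' < r m) := by
    ext m
    simp only [mem_insert, mem_filter, mem_univ, true_and]
    constructor
    · intro hm
      rcases eq_or_lt_of_le hm with h1 | h1
      · exact Or.inl (hr h1).symm
      · exact Or.inr h1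
    · rintro (rfl | h1)
      · exact le_refl _
      · exact h1.le
  have hna : a' ∉ univ.filter fun m => r a' < r m := by simp
  have hcard := Finset.card_union_of_disjoint hdisj
  rw [hunion, hins, Finset.card_insert_of_notMem hna] at hcard
  omega

open Finset in
lemma two_le_countBetween {n : ℕ} (r : Fin n → ℝ) {a a' : Fin n} (hne : a ≠ a') :
    2 ≤ countBetween r (r a) (r a') := by
  classical
  unfold countBetween
  have hsub : ({a, a'} : Finset (Fin n)) ⊆
      univ.filter fun m => min (r a) (r a') ≤ r m ∧ r m ≤ max (r a) (r a') := by
    intro m hm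
    simp only [mem_insert, mem_singleton] at hm
    simp only [mem_filter, mem_univ, true_and]
    rcases hm with rfl | rfl
    · exact ⟨min_le_left _ _, le_max_left _ _⟩
    · exact ⟨min_le_right _ _, le_max_right _ _⟩
  have hc := Finset.card_le_card hsub
  rwa [Finset.card_pair hne] at hc

lemma rank_lt_rank {n : ℕ} {r : Fin n → ℝ} (hr : Function.Injective r)
    {a a' : Fin n} (h : r a' < r a) : rankOf r a < rankOf r a' := by
  have h1 := rank_add_count hr h
  have hne : a ≠ a' := by
    intro e; subst e; exact lt_irrefl _ h
  have h2 := two_le_countBetween r hne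
  omega

lemma key (n : ℕ) (L : ℝ) (hL : 0 < L) (rM rW : Fin n → ℝ)
    (hrM : Function.Injective rM) (hrW : Function.Injective rW)
    (h4 : ¬ EventB4 n L rM rW) (h5 : ¬ EventB5 n L rM rW)
    (a a' b b' : Fin n) (hne : a ≠ a')
    (hb : rankOf rM a = rankOf rW b) (hb' : rankOf rM a' = rankOf rW b')
    (hx : rM a' < rM a)
    (hxy : |rM a - rM a'| ≤ 2*L ∨ |rW b - rW b'| ≤ 2*L) :
    |(rM a - rM a') - (rW b - rW b')| < 2*L := by
  have hrank : rankOf rM a < rankOf rM a' := rank_lt_rank hrM hx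
  have hrankW : rankOf rW b < rankOf rW b' := by omega
  have hy : rW b' < rW b := by
    by_contra hcon
    push_neg at hcon
    rcases eq_or_lt_of_le hcon with h1 | h1
    · have : b = b' := hrW h1
      rw [this] at hrankW; exact lt_irrefl _ hrankW
    · have := rank_lt_rank hrW h1
      omega
  have hcM := rank_add_count hrM hx
  have hcW := rank_add_count hrW hy
  have hcc : countBetween rM (rM a) (rM a') = countBetween rW (rW b) (rW b') := by omega
  have hccR : (countBetween rM (rM a) (rM a') : ℝ)
      = (countBetween rW (rW b) (rW b') : ℝ) := by exact_mod_cast hcc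
  -- n ≥ 2
  have h2n : 2 ≤ n := by
    have hne' : (a : ℕ) ≠ (a' : ℕ) := fun e => hne (Fin.ext e)
    have := a.isLt
    have := a'.isLt
    omega
  have hN : (0:ℝ) ≤ (n:ℝ) - 2 := by
    have : (2:ℝ) ≤ (n:ℝ) := by exact_mod_cast h2n
    linarith
  set N : ℝ := (n:ℝ) - 2 with hNdef
  set cM : ℝ := (countBetween rM (rM a) (rM a') : ℝ) with hcMdef
  set cW : ℝ := (countBetween rW (rW b) (rW b') : ℝ) with hcWdef
  have hB4M : |rM a - rM a'| ≤ 4*L →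
      (2 + |rM a - rM a'| * N - L*N < cM ∧ cM < 2 + |rM a - rM a'| * N + L*N) := by
    intro hle
    by_contra hc
    exact h4 ⟨a, a', b, b', hne, hb, hb', Or.inl ⟨hle, hc⟩⟩
  have hB4W : |rW b - rW b'| ≤ 4*L →
      (2 + |rW b - rW b'| * N - L*N < cW ∧ cW < 2 + |rW b - rW b'| * N + L*N) := by
    intro hle
    by_contra hc
    exact h4 ⟨a, a', b, b', hne, hb, hb', Or.inr ⟨hle, hc⟩⟩
  have hB5W : ¬ (4*L < |rW b - rW b'| ∧ cW ≤ 2 + 3*L*N) := fun hc =>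
    h5 ⟨a, a', b, b', hne, hb, hb', Or.inl hc⟩
  have hB5M : ¬ (4*L < |rM a - rM a'| ∧ cM ≤ 2 + 3*L*N) := fun hc =>
    h5 ⟨a, a', b, b', hne, hb, hb', Or.inr hc⟩
  have hax : |rM a - rM a'| = rM a - rM a' := abs_of_pos (by linarith)
  have hay : |rW b - rW b'| = rW b - rW b' := abs_of_pos (by linarith)
  have hboth : |rM a - rM a'| ≤ 4*L ∧ |rW b - rW b'| ≤ 4*L := by
    rcases hxy with h2 | h2
    · have hx4 : |rM a - rM a'| ≤ 4*L := by linarith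
      obtain ⟨hc1, hc2⟩ := hB4M hx4
      have hy4 : |rW b - rW b'| ≤ 4*L := by
        by_contra hcon
        push_neg at hcon
        refine hB5W ⟨hcon, ?_⟩
        have hmul : |rM a - rM a'| * N ≤ 2*L*N :=
          mul_le_mul_of_nonneg_right h2 hN
        rw [← hccR]
        nlinarith
      exact ⟨hx4, hy4⟩
    · have hy4 : |rW b - rW b'| ≤ 4*L := by linarith
      obtain ⟨hc1, hc2⟩ := hB4W hy4
      have hx4 : |rM a - rM a'| ≤ 4*L := by
        by_contra hcon
        push_neg at hcon
        refine hB5M ⟨hcon, ?_⟩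
        have hmul : |rW b - rW b'| * N ≤ 2*L*N :=
          mul_le_mul_of_nonneg_right h2 hN
        rw [hccR]
        nlinarith
      exact ⟨hx4, hy4⟩
  obtain ⟨hc1, hc2⟩ := hB4M hboth.1
  obtain ⟨hd1, hd2⟩ := hB4W hboth.2
  rw [abs_sub_lt_iff]
  rw [hax] at hc1 hc2
  rw [hay] at hd1 hd2
  rw [hccR] at hc1 hc2
  constructor
  · by_contra hcon
    push_neg at hcon
    have hmul : 2*L*N ≤ ((rM a - rM a') - (rW b - rW b'))*N :=
      mul_le_mul_of_nonneg_right hcon hN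
    nlinarith
  · by_contra hcon
    push_neg at hcon
    have hmul : 2*L*N ≤ ((rW b - rW b') - (rM a - rM a'))*N :=
      mul_le_mul_of_nonneg_right hcon hN
    nlinarith

/-- If neither event B4 nor event B5 occurs, then for all ranks
`i ≠ j`, writing `x = r_{m_i} − r_{m_j}` and `y = r_{w_i} − r_{w_j}`:
if `|x| ≤ 2L` or `|y| ≤ 2L`, then `|x − y| < 2L`. -/
theorem stmt13 (n : ℕ) (L : ℝ) (hL : 0 < L) (rM rW : Fin n → ℝ)
    (hrM : Function.Injective rM) (hrW : Function.Injective rW)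
    (h4 : ¬ EventB4 n L rM rW) (h5 : ¬ EventB5 n L rM rW) :
    ∀ a a' b b' : Fin n, a ≠ a' →
      rankOf rM a = rankOf rW b → rankOf rM a' = rankOf rW b' →
      (|rM a - rM a'| ≤ 2*L ∨ |rW b - rW b'| ≤ 2*L) →
      |(rM a - rM a') - (rW b - rW b')| < 2*L := by
  intro a a' b b' hne hb hb' hxy
  rcases lt_trichotomy (rM a') (rM a) with h | h | h
  · exact key n L hL rM rW hrM hrW h4 h5 a a' b b' hne hb hb' h hxy
  · exact absurd (hrM h.symm) hne
  · have hxy' : |rM a' - rM a| ≤ 2*L ∨ |rW b' - rW b| ≤ 2*L := by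
      rwa [abs_sub_comm (rM a') (rM a), abs_sub_comm (rW b') (rW b)]
    have := key n L hL rM rW hrM hrW h4 h5 a' a b' b hne.symm hb' hb h hxy'
    have heq : (rM a' - rM a) - (rW b' - rW b) = -((rM a - rM a') - (rW b - rW b')) := by ring
    rwa [heq, abs_neg] at this

end
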